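/- Fix α > 0, β ∈ (0, π/2), k₀ > 0, and define d(t), g(t), m(x,t) as in the exact solution: d(t) = √(sin²β + e^{4k₀²αt} cos²β), g'(t) derived from g(t) = (1/α) log((d(t)+e^{2k₀²αt}cos β)/(1+cos β)), m = (1/d)(sin β cos θ, sin β sin θ, e^{2k₀²αt} cos β) with θ = k₀(x₁+x₂) + g(t). Then m satisfies ∂ₜm = -m × Δm - α m × (m × Δm), where Δm = ∂²m/∂x₁² + ∂²m/∂x₂². -/

import Mathlib

open Real

noncomputable def cross3 (a b : EuclideanSpace ℝ (Fin 3)) : EuclideanSpace ℝ (Fin 3) :=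
  WithLp.toLp 2 ![a 1 * b 2 - a 2 * b 1, a 2 * b 0 - a 0 * b 2, a 0 * b 1 - a 1 * b 0]

lemma hasDerivAt_vec3 {f g h : ℝ → ℝ} {f' g' h' x : ℝ}
    (hf : HasDerivAt f f' x) (hg : HasDerivAt g g' x) (hh : HasDerivAt h h' x) :
    HasDerivAt (𝕜 := ℝ) (F := EuclideanSpace ℝ (Fin 3))
      (fun τ => (WithLp.toLp 2 ![f τ, g τ, h τ])) (WithLp.toLp 2 ![f', g', h']) x := by
  have H : HasDerivAt (fun τ => (![f τ, g τ, h τ] : Fin 3 → ℝ)) ![f', g', h'] x := by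
    apply hasDerivAt_pi.2
    intro i; fin_cases i <;> simpa
  exact ((EuclideanSpace.equiv (Fin 3) ℝ).symm.toContinuousLinearMap.hasFDerivAt.comp_hasDerivAt x H :)

lemma vec3_eq {a b c a' b' c' : ℝ} (h1 : a = a') (h2 : b = b') (h3 : c = c') :
    ((WithLp.toLp 2 ![a, b, c]) : EuclideanSpace ℝ (Fin 3)) = (WithLp.toLp 2 ![a', b', c']) := by
  subst h1; subst h2; subst h3; rfl

lemma add_vec3 (a b c a' b' c' : ℝ) :
    ((WithLp.toLp 2 ![a, b, c]) : EuclideanSpace ℝ (Fin 3)) + (WithLp.toLp 2 ![a', b', c']) = (WithLp.toLp 2 ![a + a', b + b', c + c']) := by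
  ext i; fin_cases i <;> simp

lemma neg_vec3 (a b c : ℝ) :
    -((WithLp.toLp 2 ![a, b, c]) : EuclideanSpace ℝ (Fin 3)) = (WithLp.toLp 2 ![-a, -b, -c]) := by
  ext i; fin_cases i <;> simp

lemma sub_vec3 (a b c a' b' c' : ℝ) :
    ((WithLp.toLp 2 ![a, b, c]) : EuclideanSpace ℝ (Fin 3)) - (WithLp.toLp 2 ![a', b', c']) = (WithLp.toLp 2 ![a - a', b - b', c - c']) := by
  ext i; fin_cases i <;> simp

lemma cross3_vec3 (a1 a2 a3 b1 b2 b3 : ℝ) :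
    cross3 (WithLp.toLp 2 ![a1, a2, a3]) (WithLp.toLp 2 ![b1, b2, b3]) =
      (WithLp.toLp 2 ![a2 * b3 - a3 * b2, a3 * b1 - a1 * b3, a1 * b2 - a2 * b1]) := by
  unfold cross3
  apply vec3_eq <;> simp

lemma smul_vec3 (r a b c : ℝ) :
    r • ((WithLp.toLp 2 ![a, b, c]) : EuclideanSpace ℝ (Fin 3)) = (WithLp.toLp 2 ![r * a, r * b, r * c]) := by
  ext i; fin_cases i <;> simp

theorem exact_solution_solves_LL (α β k₀ : ℝ) (hα : 0 < α)
    (hβ : β ∈ Set.Ioo 0 (π / 2)) (hk₀ : 0 < k₀)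
    (d g : ℝ → ℝ)
    (hd : ∀ t, d t = Real.sqrt (sin β ^ 2 + Real.exp (4 * k₀ ^ 2 * α * t) * cos β ^ 2))
    (hg : ∀ t, g t = (1 / α) *
      Real.log ((d t + Real.exp (2 * k₀ ^ 2 * α * t) * cos β) / (1 + cos β)))
    (m : ℝ → ℝ → ℝ → EuclideanSpace ℝ (Fin 3))
    (hm : ∀ x₁ x₂ t, m x₁ x₂ t = (d t)⁻¹ •
      (WithLp.toLp 2 ![sin β * cos (k₀ * (x₁ + x₂) + g t),
         sin β * sin (k₀ * (x₁ + x₂) + g t),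
         Real.exp (2 * k₀ ^ 2 * α * t) * cos β] : EuclideanSpace ℝ (Fin 3)))
    (x₁ x₂ t : ℝ) (ht : 0 < t)
    (Δm : EuclideanSpace ℝ (Fin 3))
    (hΔm : Δm = deriv (fun s => deriv (fun s' => m s' x₂ t) s) x₁
              + deriv (fun s => deriv (fun s' => m x₁ s' t) s) x₂) :
    deriv (fun τ => m x₁ x₂ τ) t
      = -(cross3 (m x₁ x₂ t) Δm) - α • cross3 (m x₁ x₂ t) (cross3 (m x₁ x₂ t) Δm) := by
  obtain ⟨hβ0, hβ1⟩ := hβ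
  have hS : 0 < sin β := sin_pos_of_pos_of_lt_pi hβ0 (by linarith [pi_pos])
  have hC : 0 < cos β := Real.cos_pos_of_mem_Ioo ⟨by linarith [pi_pos], hβ1⟩
  have hm' : ∀ a b c, m a b c =
      (WithLp.toLp 2 ![(d c)⁻¹ * (sin β * cos (k₀ * (a + b) + g c)),
        (d c)⁻¹ * (sin β * sin (k₀ * (a + b) + g c)),
        (d c)⁻¹ * (Real.exp (2 * k₀ ^ 2 * α * c) * cos β)]) := by
    intro a b c; rw [hm, smul_vec3]
  have Apos : ∀ τ : ℝ, 0 < sin β ^ 2 + Real.exp (4 * k₀ ^ 2 * α * τ) * cos β ^ 2 :=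
    fun τ => add_pos_of_nonneg_of_pos (sq_nonneg _)
      (mul_pos (Real.exp_pos _) (pow_pos hC 2))
  have hdpos : ∀ τ, 0 < d τ := fun τ => by rw [hd]; exact Real.sqrt_pos.2 (Apos τ)
  have hdsq : d t ^ 2 = sin β ^ 2 + Real.exp (4 * k₀ ^ 2 * α * t) * cos β ^ 2 := by
    rw [hd]; exact Real.sq_sqrt (Apos t).le
  have he : Real.exp (4 * k₀ ^ 2 * α * t) = Real.exp (2 * k₀ ^ 2 * α * t) ^ 2 := by
    have h := Real.exp_add (2 * k₀ ^ 2 * α * t) (2 * k₀ ^ 2 * α * t)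
    rw [show 2 * k₀ ^ 2 * α * t + 2 * k₀ ^ 2 * α * t = 4 * k₀ ^ 2 * α * t by ring] at h
    rw [h]; ring
  have Hlin : ∀ (a s : ℝ), HasDerivAt (fun τ : ℝ => a * τ) a s := fun a s => by
    simpa using (hasDerivAt_id s).const_mul a
  set S := sin β with hSdef
  set C := cos β with hCdef
  set E := Real.exp (2 * k₀ ^ 2 * α * t) with hE
  have hEpos : 0 < E := Real.exp_pos _
  set D := d t with hD
  have hDpos : 0 < D := hdpos t
  rw [he] at hdsq
  set θ := k₀ * (x₁ + x₂) + g t with hθ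
  have Hexp : HasDerivAt (fun τ : ℝ => Real.exp (2 * k₀ ^ 2 * α * τ)) (2 * k₀ ^ 2 * α * E) t := by
    have h := (Hlin (2 * k₀ ^ 2 * α) t).exp
    convert h using 1
    rw [← hE]; ring
  -- derivative of d
  have HA : HasDerivAt (fun τ => S ^ 2 + Real.exp (4 * k₀ ^ 2 * α * τ) * C ^ 2)
      (4 * k₀ ^ 2 * α * E ^ 2 * C ^ 2) t := by
    have h := (((Hlin (4 * k₀ ^ 2 * α) t).exp).mul_const (C ^ 2)).const_add (S ^ 2)
    refine h.congr_deriv ?_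
    rw [he]; ring
  have Hd : HasDerivAt d (2 * k₀ ^ 2 * α * E ^ 2 * C ^ 2 / D) t := by
    have H := HA.sqrt (Apos t).ne'
    simp only [← hd] at H
    convert H using 1
    rw [← hD]
    rw [div_eq_div_iff hDpos.ne' (by positivity)]
    ring
  -- derivative of g
  have hq : 0 < D + E * C := by positivity
  have h1C : (0:ℝ) < 1 + C := by linarith
  have Hg : HasDerivAt g (2 * k₀ ^ 2 * E * C / D) t := by
    have Hp : HasDerivAt (fun τ => (d τ + Real.exp (2 * k₀ ^ 2 * α * τ) * C) / (1 + C))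
        ((2 * k₀ ^ 2 * α * E ^ 2 * C ^ 2 / D + 2 * k₀ ^ 2 * α * E * C) / (1 + C)) t :=
      (Hd.add (Hexp.mul_const C)).div_const _
    have hpt : (d t + Real.exp (2 * k₀ ^ 2 * α * t) * C) / (1 + C) ≠ 0 := by
      rw [← hE, ← hD]; positivity
    have Hl := (Hp.log hpt).const_mul (1 / α)
    simp only [← hg] at Hl
    refine Hl.congr_deriv ?_
    rw [← hE, ← hD]
    field_simp
    ring
  -- time derivative of m
  set Dd := 2 * k₀ ^ 2 * α * E ^ 2 * C ^ 2 / D with hDd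
  set Dg := 2 * k₀ ^ 2 * E * C / D with hDg
  have Hθ : HasDerivAt (fun τ => k₀ * (x₁ + x₂) + g τ) Dg t := Hg.const_add _
  have Hinv : HasDerivAt (fun τ => (d τ)⁻¹) (-Dd / D ^ 2) t := Hd.inv hDpos.ne'
  have H1 : HasDerivAt (fun τ => (d τ)⁻¹ * (S * cos (k₀ * (x₁ + x₂) + g τ)))
      (-Dd / D ^ 2 * (S * cos θ) + D⁻¹ * (S * (-sin θ * Dg))) t :=
    Hinv.mul (Hθ.cos.const_mul S)
  have H2 : HasDerivAt (fun τ => (d τ)⁻¹ * (S * sin (k₀ * (x₁ + x₂) + g τ)))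
      (-Dd / D ^ 2 * (S * sin θ) + D⁻¹ * (S * (cos θ * Dg))) t :=
    Hinv.mul (Hθ.sin.const_mul S)
  have H3 : HasDerivAt (fun τ => (d τ)⁻¹ * (Real.exp (2 * k₀ ^ 2 * α * τ) * C))
      (-Dd / D ^ 2 * (E * C) + D⁻¹ * (2 * k₀ ^ 2 * α * E * C)) t :=
    Hinv.mul (Hexp.mul_const C)
  have HM : deriv (fun τ => m x₁ x₂ τ) t =
      ((WithLp.toLp 2 ![-Dd / D ^ 2 * (S * cos θ) + D⁻¹ * (S * (-sin θ * Dg)),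
         -Dd / D ^ 2 * (S * sin θ) + D⁻¹ * (S * (cos θ * Dg)),
         -Dd / D ^ 2 * (E * C) + D⁻¹ * (2 * k₀ ^ 2 * α * E * C)]) :
        EuclideanSpace ℝ (Fin 3)) := by
    have heq : (fun τ => m x₁ x₂ τ) = fun τ =>
        ((WithLp.toLp 2 ![(d τ)⁻¹ * (S * cos (k₀ * (x₁ + x₂) + g τ)),
           (d τ)⁻¹ * (S * sin (k₀ * (x₁ + x₂) + g τ)),
           (d τ)⁻¹ * (Real.exp (2 * k₀ ^ 2 * α * τ) * C)]) : EuclideanSpace ℝ (Fin 3)) :=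
      funext fun τ => hm' x₁ x₂ τ
    rw [heq]
    exact (hasDerivAt_vec3 H1 H2 H3).deriv
  -- spatial derivatives, direction 1
  have hph1 : ∀ s : ℝ, HasDerivAt (fun s' => k₀ * (s' + x₂) + g t) k₀ s := by
    intro s
    have := (((hasDerivAt_id s).add_const x₂).const_mul k₀).add_const (g t)
    simpa using this
  have hF1 : (fun s => deriv (fun s' => m s' x₂ t) s) = fun s =>
      ((WithLp.toLp 2 ![D⁻¹ * (S * (-sin (k₀ * (s + x₂) + g t) * k₀)),
         D⁻¹ * (S * (cos (k₀ * (s + x₂) + g t) * k₀)), 0]) : EuclideanSpace ℝ (Fin 3)) := by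
    funext s
    have heq : (fun s' => m s' x₂ t) = fun s' =>
        ((WithLp.toLp 2 ![D⁻¹ * (S * cos (k₀ * (s' + x₂) + g t)),
           D⁻¹ * (S * sin (k₀ * (s' + x₂) + g t)),
           D⁻¹ * (E * C)]) : EuclideanSpace ℝ (Fin 3)) :=
      funext fun s' => hm' s' x₂ t
    rw [heq]
    exact (hasDerivAt_vec3
      ((((hph1 s).cos).const_mul S).const_mul D⁻¹)
      ((((hph1 s).sin).const_mul S).const_mul D⁻¹)
      (hasDerivAt_const s _)).deriv
  have hD1 : deriv (fun s => deriv (fun s' => m s' x₂ t) s) x₁ =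
      ((WithLp.toLp 2 ![D⁻¹ * (S * (-(cos θ * k₀) * k₀)),
         D⁻¹ * (S * (-sin θ * k₀ * k₀)), 0]) : EuclideanSpace ℝ (Fin 3)) := by
    rw [hF1]
    exact (hasDerivAt_vec3
      (((((hph1 x₁).sin).neg.mul_const k₀).const_mul S).const_mul D⁻¹)
      (((((hph1 x₁).cos).mul_const k₀).const_mul S).const_mul D⁻¹)
      (hasDerivAt_const x₁ _)).deriv
  -- spatial derivatives, direction 2
  have hph2 : ∀ s : ℝ, HasDerivAt (fun s' => k₀ * (x₁ + s') + g t) k₀ s := by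
    intro s
    have := (((hasDerivAt_id s).const_add x₁).const_mul k₀).add_const (g t)
    simpa using this
  have hF2 : (fun s => deriv (fun s' => m x₁ s' t) s) = fun s =>
      ((WithLp.toLp 2 ![D⁻¹ * (S * (-sin (k₀ * (x₁ + s) + g t) * k₀)),
         D⁻¹ * (S * (cos (k₀ * (x₁ + s) + g t) * k₀)), 0]) : EuclideanSpace ℝ (Fin 3)) := by
    funext s
    have heq : (fun s' => m x₁ s' t) = fun s' =>
        ((WithLp.toLp 2 ![D⁻¹ * (S * cos (k₀ * (x₁ + s') + g t)),
           D⁻¹ * (S * sin (k₀ * (x₁ + s') + g t)),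
           D⁻¹ * (E * C)]) : EuclideanSpace ℝ (Fin 3)) :=
      funext fun s' => hm' x₁ s' t
    rw [heq]
    exact (hasDerivAt_vec3
      ((((hph2 s).cos).const_mul S).const_mul D⁻¹)
      ((((hph2 s).sin).const_mul S).const_mul D⁻¹)
      (hasDerivAt_const s _)).deriv
  have hD2 : deriv (fun s => deriv (fun s' => m x₁ s' t) s) x₂ =
      ((WithLp.toLp 2 ![D⁻¹ * (S * (-(cos θ * k₀) * k₀)),
         D⁻¹ * (S * (-sin θ * k₀ * k₀)), 0]) : EuclideanSpace ℝ (Fin 3)) := by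
    rw [hF2]
    exact (hasDerivAt_vec3
      (((((hph2 x₂).sin).neg.mul_const k₀).const_mul S).const_mul D⁻¹)
      (((((hph2 x₂).cos).mul_const k₀).const_mul S).const_mul D⁻¹)
      (hasDerivAt_const x₂ _)).deriv
  clear_value Dd Dg
  have hΔm' : Δm = ((WithLp.toLp 2 ![-2 * k₀ ^ 2 * (D⁻¹ * (S * cos θ)),
      -2 * k₀ ^ 2 * (D⁻¹ * (S * sin θ)), 0]) : EuclideanSpace ℝ (Fin 3)) := by
    rw [hΔm, hD1, hD2, add_vec3]
    apply vec3_eq <;> ring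
  rw [HM, hΔm', hm' x₁ x₂ t]
  have hsc : sin θ ^ 2 + cos θ ^ 2 = 1 := sin_sq_add_cos_sq θ
  rw [hDd, hDg, ← hD, ← hE, ← hθ]
  clear_value S C E D θ
  clear hΔm HM hm hm' hd hg hD1 hD2 hF1 hF2 H1 H2 H3 Hθ Hinv Hd Hg Hexp HA
  rw [cross3_vec3, cross3_vec3, smul_vec3, neg_vec3, sub_vec3]
  apply vec3_eq
  · field_simp; ring
  · field_simp; ring
  · field_simp
    linear_combination (2 * k₀ ^ 2 * α * E * C) * hdsq -
      (2 * k₀ ^ 2 * α * E * C * S ^ 2) * hsc
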